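/- Construction of fractional MDS codes for k = 2: suppose r_0 divides h and let n = (q^{h+r_0} - 1)/(q^{r_0} - 1) = q^h + (q^h - 1)/(q^{r_0} - 1). Let A be a set of representatives of the one-dimensional F_{q^{r_0}}-subspaces of F_{q^{h+r_0}}, let w be a primitive element of F_{q^{h+r_0}}, and let {1, α, ..., α^{h/r_0 - 1}} be an F_{q^{r_0}}-basis of F_{q^h}. Define, for each x ∈ F_{q^{h+r_0}}, the vector c(x) ∈ (F_{q^h})^n with coordinate indexed by a ∈ A equal to Σ_{j=0}^{h/r_0 - 1} Tr(x a w^j) α^j, where Tr is the trace from F_{q^{h+r_0}} to F_{q^{r_0}}. Then C = {c(x) : x ∈ F_{q^{h+r_0}}} is an additive code of size q^{h+r_0} and minimum distance n - 1; in particular, for each nonzero x, there is exactly one a ∈ A with c(x)_a = 0. -/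

import Mathlib

open Projectivization in
/-- Construction of fractional MDS codes for `k = 2`: with `F = F_{q^{r₀}}`, `E = F_{q^h}`,
`L = F_{q^{h+r₀}}` (where `r₀ ∣ h`, `m = h/r₀`), coordinates indexed by representatives of the
points of `PG(h/r₀, q^{r₀})` (the projectivization of `L` over `F`), a primitive element `w`
of `L` and `F`-linearly independent powers `1, α, …, α^{m-1}` in `E`, the map
`c(x)_a = ∑_j Tr_{L→F}(x a w^j) α^j` defines an additive code of size `q^{h+r₀}` and minimum
distance `n - 1`: for each nonzero `x` there is exactly one point where `c(x)` vanishes. -/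
theorem fractional_MDS_construction_k2
    (q h r0 m : ℕ) (F E L : Type)
    [Field F] [Fintype F] [Field E] [Fintype E] [DecidableEq E]
    [Field L] [Fintype L] [Algebra F E] [Algebra F L]
    [Fintype (Projectivization F L)]
    (hq : 2 ≤ q) (hr01 : 1 ≤ r0) (hdvd : r0 ∣ h) (hm : m = h / r0)
    (hF : Fintype.card F = q ^ r0) (hE : Fintype.card E = q ^ h)
    (hL : Fintype.card L = q ^ (h + r0))
    (α : E) (hα : LinearIndependent F (fun j : Fin m => α ^ (j : ℕ)))
    (w : L) (hw : ∀ z : L, z ≠ 0 → ∃ t : ℕ, z = w ^ t)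
    (c : L → Projectivization F L → E)
    (hc : ∀ x p, c x p =
      ∑ j : Fin m, Algebra.trace F L (x * p.rep * w ^ (j : ℕ)) • α ^ (j : ℕ)) :
    (∀ x y : L, c (x + y) = c x + c y) ∧
    Function.Injective c ∧
    Nat.card (Set.range c) = q ^ (h + r0) ∧
    (∀ x : L, x ≠ 0 → ∃! p : Projectivization F L, c x p = 0) ∧
    (∀ x : L, x ≠ 0 →
      hammingNorm (c x) = Fintype.card (Projectivization F L) - 1) := by
  classical
  haveI : Algebra.IsAlgebraic F L := Algebra.IsAlgebraic.of_finite F L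
  -- basic numerology
  have hh1 : 1 ≤ h := by
    rcases Nat.eq_zero_or_pos h with h0 | h1
    · subst h0
      have : (1 : ℕ) < Fintype.card E := Fintype.one_lt_card
      rw [hE, pow_zero] at this
      omega
    · exact h1
  have hr0h : r0 ≤ h := Nat.le_of_dvd (by omega) hdvd
  have hm1 : 1 ≤ m := by
    rw [hm]
    exact (Nat.one_le_div_iff (by omega)).2 hr0h
  have hrm : r0 * m = h := by rw [hm]; exact Nat.mul_div_cancel' hdvd
  have hrank : Module.finrank F L = m + 1 := by
    have hcard : Fintype.card L = Fintype.card F ^ Module.finrank F L :=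
      Module.card_eq_pow_finrank
    rw [hL, hF, ← pow_mul] at hcard
    have h1 : h + r0 = r0 * Module.finrank F L := Nat.pow_right_injective hq hcard
    have h2 : r0 * (m + 1) = r0 * Module.finrank F L := by
      rw [Nat.mul_add, hrm, mul_one]; exact h1
    exact (Nat.eq_of_mul_eq_mul_left (by omega) h2).symm
  -- powers of w are linearly independent
  have hwint : IsIntegral F w := IsIntegral.of_finite F w
  have hwtop : IntermediateField.adjoin F {w} = ⊤ := by
    rw [eq_top_iff]
    intro z _
    rcases eq_or_ne z 0 with rfl | hz
    · exact zero_mem _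
    · obtain ⟨t, rfl⟩ := hw z hz
      exact pow_mem (IntermediateField.mem_adjoin_simple_self F w) t
  have hdeg : (minpoly F w).natDegree = m + 1 := by
    rw [← IntermediateField.adjoin.finrank hwint, hwtop,
      IntermediateField.finrank_top', hrank]
  have hwind : LinearIndependent F (fun j : Fin (m + 1) => w ^ (j : ℕ)) := by
    have := linearIndependent_pow (K := F) w
    rwa [hdeg] at this
  have hnd := traceForm_nondegenerate F L
  -- extracting coefficients from `c x p = 0`
  have hcoeff : ∀ z p, c z p = 0 →
      ∀ j : Fin m, Algebra.trace F L (z * p.rep * w ^ (j : ℕ)) = 0 := by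
    intro z p hzp
    exact Fintype.linearIndependent_iff.1 hα _ (by rw [← hc]; exact hzp)
  -- the key fact: a unique vanishing point for each nonzero x
  have key : ∀ x : L, x ≠ 0 → ∃ p₀ : Projectivization F L,
      ∀ p, c x p = 0 ↔ p = p₀ := by
    intro x hx
    set φ : L →ₗ[F] (Fin m → F) :=
      LinearMap.pi (fun j : Fin m =>
        (Algebra.trace F L) ∘ₗ (LinearMap.mulLeft F (x * w ^ (j : ℕ)))) with hφdef
    have hφapp : ∀ (v : L) (j : Fin m),
        φ v j = Algebra.trace F L (x * v * w ^ (j : ℕ)) := by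
      intro v j
      simp only [hφdef, LinearMap.pi_apply, LinearMap.coe_comp, Function.comp_apply,
        LinearMap.mulLeft_apply]
      congr 1
      ring
    -- linear independence of the x * w^j
    have hu : LinearIndependent F (fun j : Fin m => x * w ^ (j : ℕ)) := by
      have h1 : LinearIndependent F (fun j : Fin m => w ^ (j : ℕ)) := by
        have := hwind.comp (Fin.castLE (Nat.le_succ m)) (Fin.castLE_injective _)
        simpa [Function.comp_def] using this
      have hker : LinearMap.ker (LinearMap.mulLeft F x) = ⊥ := by
        rw [LinearMap.ker_eq_bot]
        intro a b hab
        simp only [LinearMap.mulLeft_apply] at hab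
        exact mul_left_cancel₀ hx hab
      have := h1.map' (LinearMap.mulLeft F x) hker
      simpa [Function.comp_def] using this
    -- surjectivity of φ
    have hsurj : Function.Surjective φ := by
      rw [← LinearMap.dualMap_injective_iff, ← LinearMap.ker_eq_bot,
        LinearMap.ker_eq_bot']
      intro ξ hξ
      have hξ' : ∀ v : L, ξ (φ v) = 0 := by
        intro v
        simpa using LinearMap.congr_fun hξ v
      set g : Fin m → F := fun j => ξ (fun i => if j = i then (1 : F) else 0) with hg
      have hξsum : ∀ y : Fin m → F, ξ y = ∑ j : Fin m, y j * g j := by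
        intro y
        conv_lhs => rw [pi_eq_sum_univ y]
        rw [map_sum]
        exact Finset.sum_congr rfl fun j _ => by rw [map_smul, smul_eq_mul, hg]
      have etr : ∀ (v : L) (j : Fin m),
          Algebra.trace F L (x * w ^ (j : ℕ) * v) = φ v j := by
        intro v j
        rw [hφapp]
        congr 1
        ring
      have hzero : (∑ j : Fin m, g j • (x * w ^ (j : ℕ))) = 0 := by
        apply hnd.1
        intro v
        rw [Algebra.traceForm_apply]
        have e1 : (∑ j : Fin m, g j • (x * w ^ (j : ℕ))) * v
            = ∑ j : Fin m, g j • (x * w ^ (j : ℕ) * v) := by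
          rw [Finset.sum_mul]
          exact Finset.sum_congr rfl fun j _ => smul_mul_assoc _ _ _
        rw [e1, map_sum]
        calc (∑ j : Fin m, Algebra.trace F L (g j • (x * w ^ (j : ℕ) * v)))
            = ∑ j : Fin m, φ v j * g j := by
              refine Finset.sum_congr rfl fun j _ => ?_
              rw [map_smul, smul_eq_mul, etr, mul_comm]
          _ = ξ (φ v) := (hξsum (φ v)).symm
          _ = 0 := hξ' v
      have hg0 : ∀ j, g j = 0 :=
        Fintype.linearIndependent_iff.1 hu g hzero
      apply LinearMap.ext
      intro y
      rw [hξsum y, LinearMap.zero_apply]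
      exact Finset.sum_eq_zero fun j _ => by rw [hg0 j, mul_zero]
    -- the kernel of φ is one-dimensional
    have hker1 : Module.finrank F (LinearMap.ker φ) = 1 := by
      have h1 := LinearMap.finrank_range_add_finrank_ker φ
      rw [LinearMap.range_eq_top.2 hsurj, finrank_top, hrank,
        Module.finrank_fin_fun] at h1
      omega
    rw [finrank_eq_one_iff'] at hker1
    obtain ⟨v₀, hv₀ne, hv₀span⟩ := hker1
    have hv₀ : (v₀ : L) ≠ 0 := by
      simpa [Submodule.coe_eq_zero] using hv₀ne
    -- characterization of vanishing in terms of the kernel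
    have hchar : ∀ p : Projectivization F L, c x p = 0 ↔ p.rep ∈ LinearMap.ker φ := by
      intro p
      constructor
      · intro hp
        rw [LinearMap.mem_ker]
        ext j
        rw [hφapp, Pi.zero_apply]
        exact hcoeff x p hp j
      · intro hp
        rw [hc]
        apply Finset.sum_eq_zero
        intro j _
        have : Algebra.trace F L (x * p.rep * w ^ (j : ℕ)) = 0 := by
          rw [← hφapp]
          rw [LinearMap.mem_ker] at hp
          rw [hp, Pi.zero_apply]
        rw [this, zero_smul]
    refine ⟨Projectivization.mk F (v₀ : L) hv₀, fun p => ?_⟩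
    rw [hchar]
    constructor
    · intro hp
      obtain ⟨t, ht⟩ := hv₀span ⟨p.rep, hp⟩
      have ht' : t • (v₀ : L) = p.rep := by
        have := congrArg (Subtype.val) ht
        simpa using this
      have : Projectivization.mk F p.rep p.rep_nonzero
          = Projectivization.mk F (v₀ : L) hv₀ :=
        (Projectivization.mk_eq_mk_iff' F _ _ _ _).2 ⟨t, ht'⟩
      rw [Projectivization.mk_rep] at this
      exact this
    · rintro rfl
      obtain ⟨a, ha⟩ := Projectivization.exists_smul_eq_mk_rep F (v₀ : L) hv₀
      rw [← ha]
      exact Submodule.smul_mem _ _ v₀.2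
  -- additivity
  have hadd : ∀ x y : L, c (x + y) = c x + c y := by
    intro x y
    funext p
    simp only [hc, Pi.add_apply, add_mul, map_add, add_smul, Finset.sum_add_distrib]
  -- a trace-type argument: if c z vanishes identically then z = 0
  have hzero : ∀ z : L, (∀ p, c z p = 0) → z = 0 := by
    intro z hz
    apply hnd.1
    intro v
    rw [Algebra.traceForm_apply]
    rcases eq_or_ne v 0 with rfl | hv
    · rw [mul_zero, map_zero]
    · set p := Projectivization.mk F v hv with hp
      obtain ⟨a, ha⟩ := Projectivization.exists_smul_eq_mk_rep F v hv
      have h1 := hcoeff z p (hz p) ⟨0, by omega⟩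
      simp only [pow_zero, mul_one] at h1
      rw [← ha] at h1
      rw [Units.smul_def, mul_smul_comm, map_smul, smul_eq_mul] at h1
      exact (mul_eq_zero.1 h1).resolve_left (Units.ne_zero a)
  -- injectivity
  have hinj : Function.Injective c := by
    intro x y hxy
    have hsub : ∀ p, c (x - y) p = 0 := by
      intro p
      have h1 := hadd (x - y) y
      rw [sub_add_cancel] at h1
      have h2 : c x p = c (x - y) p + c y p := by rw [h1]; rfl
      have h3 : c x p = c y p := by rw [hxy]
      rw [h3] at h2
      have h4 : c (x - y) p + c y p = 0 + c y p := by rw [zero_add, ← h2]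
      exact add_right_cancel h4
    have := hzero (x - y) hsub
    exact sub_eq_zero.1 this
  refine ⟨hadd, hinj, ?_, ?_, ?_⟩
  · rw [Nat.card_eq_fintype_card, Set.card_range_of_injective hinj, hL]
  · intro x hx
    obtain ⟨p₀, hp₀⟩ := key x hx
    exact ⟨p₀, (hp₀ p₀).2 rfl, fun p hp => (hp₀ p).1 hp⟩
  · intro x hx
    obtain ⟨p₀, hp₀⟩ := key x hx
    have h1 : (Finset.univ.filter fun p => c x p ≠ 0) = Finset.univ \ {p₀} := by
      ext p
      simp only [Finset.mem_filter, Finset.mem_univ, true_and, Finset.mem_sdiff,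
        Finset.mem_singleton, ne_eq]
      rw [hp₀ p]
    show (Finset.univ.filter fun p => c x p ≠ 0).card
        = Fintype.card (Projectivization F L) - 1
    rw [h1, Finset.card_sdiff_of_subset (by simp), Finset.card_univ, Finset.card_singleton]
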